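/- arXiv:2602.12513 — 4 statements merged into one kernel-verified Lean document; each statement's English description precedes it below -/
import Mathlib

section
/- Let (x*, μ*) be an optimal solution to the primal LP min{μ : μ·e ⪰ Aᵀx, eᵀx = 1, x ⪰ 0} and let (y*, ν*) be an optimal solution to the dual LP max{ν : ν·e ⪯ Ay, eᵀy = 1, y ⪰ 0}. Then (x*, y*) is a Nash equilibrium of the matrix game, i.e., for all x ∈ Δ_{m1} and y ∈ Δ_{m2}: x*ᵀAy ≤ x*ᵀAy* ≤ xᵀAy*. -/
/-- Theorem of the alternative for matrix games, proved via separating hyperplanes: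
if every mixed column strategy has some row with negative payoff sum, then there is a
mixed row strategy making every column sum strictly negative. -/
lemma matrix_alt (m1 m2 : ℕ) (B : Matrix (Fin m1) (Fin m2) ℝ) (hm2 : 0 < m2)
    (h : ∀ y ∈ stdSimplex ℝ (Fin m2), ∃ i, ∑ j, B i j * y j < 0) :
    ∃ x ∈ stdSimplex ℝ (Fin m1), ∀ j, ∑ i, B i j * x i < 0 := by
  set s : Set (Fin m1 → ℝ) := B.mulVecLin '' stdSimplex ℝ (Fin m2) with hs_def
  set t : Set (Fin m1 → ℝ) := {p | ∀ i, 0 ≤ p i} with ht_def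
  have hmulVec : ∀ y i, B.mulVecLin y i = ∑ j, B i j * y j := by
    intro y i
    simp [Matrix.mulVecLin, Matrix.mulVec, dotProduct]
  have hs_conv : Convex ℝ s := (convex_stdSimplex ℝ _).linear_image B.mulVecLin
  have hs_comp : IsCompact s :=
    (isCompact_stdSimplex _ _).image B.mulVecLin.continuous_of_finiteDimensional
  have ht_conv : Convex ℝ t := by
    intro p hp q hq a b ha hb hab i
    have := add_nonneg (mul_nonneg ha (hp i)) (mul_nonneg hb (hq i))
    simpa using this
  have ht_closed : IsClosed t := by
    have : t = ⋂ i, (fun p : Fin m1 → ℝ => p i) ⁻¹' Set.Ici 0 := by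
      ext p; simp [ht_def, Set.mem_iInter]
    rw [this]
    exact isClosed_iInter fun i => isClosed_Ici.preimage (continuous_apply i)
  have hdisj : Disjoint s t := by
    rw [Set.disjoint_left]
    rintro z ⟨y, hy, rfl⟩ hz
    obtain ⟨i, hi⟩ := h y hy
    have := hz i
    rw [hmulVec] at this
    linarith
  obtain ⟨f, u, v, hfs, huv, hft⟩ :=
    geometric_hahn_banach_compact_closed hs_conv hs_comp ht_conv ht_closed hdisj
  have hv0 : v < 0 := by
    have := hft 0 (fun i => le_refl 0)
    simpa using this
  set x : Fin m1 → ℝ := fun i => f (Pi.single i 1) with hx_def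
  have hx_nonneg : ∀ i, 0 ≤ x i := by
    intro i
    by_contra hneg
    push_neg at hneg
    have ha : x i < 0 := hneg
    set c : ℝ := (v - 1) / x i with hc_def
    have hc_pos : 0 ≤ c := by
      rw [hc_def, div_nonneg_iff]; right; constructor <;> linarith
    have hmem : (c • (Pi.single i (1:ℝ) : Fin m1 → ℝ)) ∈ t := by
      intro k
      simp only [Pi.smul_apply, smul_eq_mul]
      exact mul_nonneg hc_pos (by by_cases hk : k = i <;> simp [Pi.single_apply, hk])
    have := hft _ hmem
    rw [map_smul] at this
    have hx' : f (Pi.single i 1) = x i := rfl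
    simp only [smul_eq_mul, hx'] at this
    have hfc : c * x i = v - 1 := by
      rw [hc_def]; exact div_mul_cancel₀ _ ha.ne
    rw [hfc] at this
    linarith
  have hf_repr : ∀ z : Fin m1 → ℝ, f z = ∑ i, z i * x i := by
    intro z
    have hz : z = ∑ i, z i • (Pi.single i (1:ℝ) : Fin m1 → ℝ) := by
      have : ∀ i, z i • (Pi.single i (1:ℝ) : Fin m1 → ℝ) = Pi.single i (z i) := by
        intro i; ext k
        by_cases hk : k = i <;> simp [Pi.single_apply, hk]
      rw [funext this, Finset.univ_sum_single]
    calc f z = f (∑ i, z i • (Pi.single i (1:ℝ) : Fin m1 → ℝ)) := by rw [← hz]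
      _ = ∑ i, z i • f ((Pi.single i (1:ℝ) : Fin m1 → ℝ)) := by rw [map_sum]; simp [map_smul]
      _ = ∑ i, z i * x i := by simp [hx_def]
  set S : ℝ := ∑ i, x i with hS_def
  have hy0 : Pi.single (⟨0, hm2⟩ : Fin m2) (1:ℝ) ∈ stdSimplex ℝ (Fin m2) := by
    constructor
    · intro k; by_cases hk : k = ⟨0, hm2⟩ <;> simp [Pi.single_apply, hk]
    · simp
  have hS_pos : 0 < S := by
    rcases lt_or_eq_of_le (Finset.sum_nonneg fun i _ => hx_nonneg i) with h' | h'
    · exact h'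
    · exfalso
      have hx0 : ∀ i, x i = 0 := by
        intro i
        have := (Finset.sum_eq_zero_iff_of_nonneg (fun i _ => hx_nonneg i)).mp h'.symm
        exact this i (Finset.mem_univ i)
      have hfz : ∀ z, f z = 0 := by
        intro z; rw [hf_repr]; simp [hx0]
      have := hfs (B.mulVecLin (Pi.single (⟨0, hm2⟩ : Fin m2) 1)) ⟨_, hy0, rfl⟩
      rw [hfz] at this
      linarith
  refine ⟨fun i => x i / S, ⟨fun i => div_nonneg (hx_nonneg i) hS_pos.le, ?_⟩, ?_⟩
  · rw [← Finset.sum_div, ← hS_def, div_self hS_pos.ne']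
  · intro j
    have hcol : f (B.mulVecLin (Pi.single j 1)) = ∑ i, B i j * x i := by
      rw [hf_repr]
      congr 1; ext i
      rw [hmulVec]
      congr 1
      simp [Pi.single_apply, Finset.sum_ite_eq']
    have hmemj : Pi.single j (1:ℝ) ∈ stdSimplex ℝ (Fin m2) := by
      constructor
      · intro k; by_cases hk : k = j <;> simp [Pi.single_apply, hk]
      · simp
    have hlt := hfs (B.mulVecLin (Pi.single j 1)) ⟨_, hmemj, rfl⟩
    rw [hcol] at hlt
    have hneg : ∑ i, B i j * x i < 0 := by linarith
    have : ∑ i, B i j * (x i / S) = (∑ i, B i j * x i) / S := by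
      rw [Finset.sum_div]
      exact Finset.sum_congr rfl fun i _ => (mul_div_assoc _ _ _).symm
    rw [this]
    exact div_neg_of_neg_of_pos hneg hS_pos

/-- If `(x*, μ*)` is optimal for the primal game LP and `(y*, ν*)` is
optimal for the dual game LP, then `(x*, y*)` is a Nash equilibrium:
`x*ᵀAy ≤ x*ᵀAy* ≤ xᵀAy*` for all simplex strategies `x, y`. -/
theorem stmt_1 (m1 m2 : ℕ) (A : Matrix (Fin m1) (Fin m2) ℝ)
    (xs : Fin m1 → ℝ) (μs : ℝ) (ys : Fin m2 → ℝ) (νs : ℝ)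
    (hxfeas : (∀ i, 0 ≤ xs i) ∧ (∑ i, xs i) = 1 ∧ ∀ j, (∑ i, A i j * xs i) ≤ μs)
    (hxopt : ∀ (x : Fin m1 → ℝ) (μ : ℝ), (∀ i, 0 ≤ x i) → (∑ i, x i) = 1 →
      (∀ j, (∑ i, A i j * x i) ≤ μ) → μs ≤ μ)
    (hyfeas : (∀ j, 0 ≤ ys j) ∧ (∑ j, ys j) = 1 ∧ ∀ i, νs ≤ ∑ j, A i j * ys j)
    (hyopt : ∀ (y : Fin m2 → ℝ) (ν : ℝ), (∀ j, 0 ≤ y j) → (∑ j, y j) = 1 →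
      (∀ i, ν ≤ ∑ j, A i j * y j) → ν ≤ νs) :
    ∀ x ∈ stdSimplex ℝ (Fin m1), ∀ y ∈ stdSimplex ℝ (Fin m2),
      (∑ i, ∑ j, xs i * A i j * y j) ≤ (∑ i, ∑ j, xs i * A i j * ys j) ∧
      (∑ i, ∑ j, xs i * A i j * ys j) ≤ ∑ i, ∑ j, x i * A i j * ys j := by
  obtain ⟨hxs_nonneg, hxs_sum, hxs_feas⟩ := hxfeas
  obtain ⟨hys_nonneg, hys_sum, hys_feas⟩ := hyfeas
  have hm2 : 0 < m2 := by
    by_contra hm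
    push_neg at hm
    interval_cases m2
    simp at hys_sum
  -- strong duality: μs ≤ νs
  have hμν : μs ≤ νs := by
    by_contra hlt
    push_neg at hlt
    set c : ℝ := (μs + νs) / 2 with hc_def
    have hc1 : νs < c := by rw [hc_def]; linarith
    have hc2 : c < μs := by rw [hc_def]; linarith
    by_cases hcase : ∀ y ∈ stdSimplex ℝ (Fin m2), ∃ i, ∑ j, (A i j - c) * y j < 0
    · obtain ⟨x, ⟨hx_nonneg, hx_sum⟩, hx⟩ :=
        matrix_alt m1 m2 (fun i j => A i j - c) hm2 hcase
      have hfeas : ∀ j, ∑ i, A i j * x i ≤ c := by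
        intro j
        have := hx j
        have hsum : ∑ i, ((fun i j => A i j - c) i j) * x i
            = ∑ i, A i j * x i - c := by
          simp only [sub_mul, Finset.sum_sub_distrib, ← Finset.mul_sum, hx_sum, mul_one]
        rw [hsum] at this
        linarith
      have := hxopt x c hx_nonneg hx_sum hfeas
      linarith
    · push_neg at hcase
      obtain ⟨y, ⟨hy_nonneg, hy_sum⟩, hy⟩ := hcase
      have hfeas : ∀ i, c ≤ ∑ j, A i j * y j := by
        intro i
        have := hy i
        have hsum : ∑ j, (A i j - c) * y j = ∑ j, A i j * y j - c := by
          simp only [sub_mul, Finset.sum_sub_distrib, ← Finset.mul_sum, hy_sum, mul_one]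
        rw [hsum] at this
        linarith
      have := hyopt y c hy_nonneg hy_sum hfeas
      linarith
  -- generic upper bound: xsᵀ A y ≤ μs for y in the simplex
  have hupper : ∀ y ∈ stdSimplex ℝ (Fin m2), (∑ i, ∑ j, xs i * A i j * y j) ≤ μs := by
    rintro y ⟨hy_nonneg, hy_sum⟩
    calc ∑ i, ∑ j, xs i * A i j * y j
        = ∑ j, (∑ i, A i j * xs i) * y j := by
          rw [Finset.sum_comm]
          congr 1; ext j
          rw [Finset.sum_mul]
          congr 1; ext i; ring
      _ ≤ ∑ j, μs * y j := Finset.sum_le_sum fun j _ =>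
          mul_le_mul_of_nonneg_right (hxs_feas j) (hy_nonneg j)
      _ = μs := by rw [← Finset.mul_sum, hy_sum, mul_one]
  -- generic lower bound: νs ≤ xᵀ A ys for x in the simplex
  have hlower : ∀ x ∈ stdSimplex ℝ (Fin m1), νs ≤ ∑ i, ∑ j, x i * A i j * ys j := by
    rintro x ⟨hx_nonneg, hx_sum⟩
    calc νs = ∑ i, x i * νs := by rw [← Finset.sum_mul, hx_sum, one_mul]
      _ ≤ ∑ i, x i * ∑ j, A i j * ys j := Finset.sum_le_sum fun i _ =>
          mul_le_mul_of_nonneg_left (hys_feas i) (hx_nonneg i)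
      _ = ∑ i, ∑ j, x i * A i j * ys j := by
          congr 1; ext i
          rw [Finset.mul_sum]
          congr 1; ext j; ring
  have hxs_mem : xs ∈ stdSimplex ℝ (Fin m1) := ⟨hxs_nonneg, hxs_sum⟩
  have hys_mem : ys ∈ stdSimplex ℝ (Fin m2) := ⟨hys_nonneg, hys_sum⟩
  have hP1 : (∑ i, ∑ j, xs i * A i j * ys j) ≤ μs := hupper ys hys_mem
  have hP2 : νs ≤ ∑ i, ∑ j, xs i * A i j * ys j := hlower xs hxs_mem
  intro x hx y hy
  constructor
  · have := hupper y hy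
    linarith
  · have := hlower x hx
    linarith
end

section
/- Strong duality holds between the two game LPs: the optimal value of min{μ : μ·e^{m2} ⪰ Aᵀx, eᵀx = 1, x ⪰ 0, μ ∈ ℝ} equals the optimal value of max{ν : ν·e^{m1} ⪯ Ay, eᵀy = 1, y ⪰ 0, ν ∈ ℝ}. -/
/-- Strong duality between the two game LPs:
`min{μ : μ·e ⪰ Aᵀx, eᵀx = 1, x ⪰ 0} = max{ν : ν·e ⪯ Ay, eᵀy = 1, y ⪰ 0}`. -/
theorem stmt_2 (m1 m2 : ℕ) (hm1 : 0 < m1) (hm2 : 0 < m2)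
    (A : Matrix (Fin m1) (Fin m2) ℝ) :
    sInf {μ : ℝ | ∃ x : Fin m1 → ℝ, (∀ i, 0 ≤ x i) ∧ (∑ i, x i) = 1 ∧
        ∀ j, (∑ i, A i j * x i) ≤ μ} =
    sSup {ν : ℝ | ∃ y : Fin m2 → ℝ, (∀ j, 0 ≤ y j) ∧ (∑ j, y j) = 1 ∧
        ∀ i, ν ≤ ∑ j, A i j * y j} := by
  classical
  set P : Set ℝ := {μ : ℝ | ∃ x : Fin m1 → ℝ, (∀ i, 0 ≤ x i) ∧ (∑ i, x i) = 1 ∧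
        ∀ j, (∑ i, A i j * x i) ≤ μ} with hP
  set Q : Set ℝ := {ν : ℝ | ∃ y : Fin m2 → ℝ, (∀ j, 0 ≤ y j) ∧ (∑ j, y j) = 1 ∧
        ∀ i, ν ≤ ∑ j, A i j * y j} with hQ
  have hne1 : (Finset.univ : Finset (Fin m1)).Nonempty := ⟨⟨0, hm1⟩, Finset.mem_univ _⟩
  have hne2 : (Finset.univ : Finset (Fin m2)).Nonempty := ⟨⟨0, hm2⟩, Finset.mem_univ _⟩
  obtain ⟨i0, -⟩ := hne1
  obtain ⟨j0, -⟩ := hne2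
  have hne1 : (Finset.univ : Finset (Fin m1)).Nonempty := ⟨i0, Finset.mem_univ _⟩
  have hne2 : (Finset.univ : Finset (Fin m2)).Nonempty := ⟨j0, Finset.mem_univ _⟩
  -- uniform strategies
  have hxu : ∀ n : ℕ, 0 < n → (∑ _i : Fin n, (n : ℝ)⁻¹) = 1 := by
    intro n hn
    rw [Finset.sum_const, Finset.card_univ, Fintype.card_fin, nsmul_eq_mul]
    field_simp
  -- P is nonempty
  have hPne : P.Nonempty := by
    refine ⟨((Finset.univ : Finset (Fin m2)).sup' hne2 (fun j => ∑ i, A i j * (m1 : ℝ)⁻¹) : ℝ),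
      fun _ => (m1 : ℝ)⁻¹, fun i => by positivity, hxu m1 hm1, fun j => ?_⟩
    exact Finset.le_sup' (fun j => ∑ i, A i j * (m1 : ℝ)⁻¹) (Finset.mem_univ j)
  -- Q is nonempty
  have hQne : Q.Nonempty := by
    refine ⟨((Finset.univ : Finset (Fin m1)).inf' hne1 (fun i => ∑ j, A i j * (m2 : ℝ)⁻¹) : ℝ),
      fun _ => (m2 : ℝ)⁻¹, fun j => by positivity, hxu m2 hm2, fun i => ?_⟩
    exact Finset.inf'_le (fun i => ∑ j, A i j * (m2 : ℝ)⁻¹) (Finset.mem_univ i)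
  -- Q is bounded above
  have hQbdd : BddAbove Q := by
    refine ⟨Finset.univ.sup' hne2 (A i0), ?_⟩
    rintro ν ⟨y, hy0, hy1, hyν⟩
    calc ν ≤ ∑ j, A i0 j * y j := hyν i0
      _ ≤ ∑ j, Finset.univ.sup' hne2 (A i0) * y j := by
          refine Finset.sum_le_sum fun j _ => ?_
          exact mul_le_mul_of_nonneg_right (Finset.le_sup' _ (Finset.mem_univ j)) (hy0 j)
      _ = Finset.univ.sup' hne2 (A i0) := by rw [← Finset.mul_sum, hy1, mul_one]
  -- P is bounded below
  have hPbdd : BddBelow P := by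
    refine ⟨Finset.univ.inf' hne1 (fun i => A i j0), ?_⟩
    rintro μ ⟨x, hx0, hx1, hxμ⟩
    calc Finset.univ.inf' hne1 (fun i => A i j0)
        = ∑ i, Finset.univ.inf' hne1 (fun i => A i j0) * x i := by
          rw [← Finset.mul_sum, hx1, mul_one]
      _ ≤ ∑ i, A i j0 * x i := by
          refine Finset.sum_le_sum fun i _ => ?_
          exact mul_le_mul_of_nonneg_right (Finset.inf'_le _ (Finset.mem_univ i)) (hx0 i)
      _ ≤ μ := hxμ j0
  -- weak duality
  have hweak : sSup Q ≤ sInf P := by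
    refine le_csInf hPne fun μ hμ => csSup_le hQne fun ν hν => ?_
    obtain ⟨x, hx0, hx1, hxμ⟩ := hμ
    obtain ⟨y, hy0, hy1, hyν⟩ := hν
    calc ν = ∑ i, ν * x i := by rw [← Finset.mul_sum, hx1, mul_one]
      _ ≤ ∑ i, (∑ j, A i j * y j) * x i := by
          refine Finset.sum_le_sum fun i _ => ?_
          exact mul_le_mul_of_nonneg_right (hyν i) (hx0 i)
      _ = ∑ j, (∑ i, A i j * x i) * y j := by
          simp only [Finset.sum_mul]
          rw [Finset.sum_comm]
          refine Finset.sum_congr rfl fun j _ => Finset.sum_congr rfl fun i _ => by ring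
      _ ≤ ∑ j, μ * y j := by
          refine Finset.sum_le_sum fun j _ => ?_
          exact mul_le_mul_of_nonneg_right (hxμ j) (hy0 j)
      _ = μ := by rw [← Finset.mul_sum, hy1, mul_one]
  -- strong duality: sInf P ≤ sSup Q, by separation
  set v : ℝ := sSup Q with hv
  have hstrong : sInf P ≤ v := by
    -- the open set and the convex set
    set U : Set (Fin m1 → ℝ) := {u | ∀ i, v < u i} with hU
    set D : Set (Fin m1 → ℝ) := {u | ∃ y : Fin m2 → ℝ, (∀ j, 0 ≤ y j) ∧ (∑ j, y j) = 1 ∧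
        ∀ i, u i ≤ ∑ j, A i j * y j} with hD
    have hUopen : IsOpen U := by
      have : U = ⋂ i, (fun u : Fin m1 → ℝ => u i) ⁻¹' Set.Ioi v := by
        ext u; simp [hU, Set.mem_iInter]
      rw [this]
      exact isOpen_iInter_of_finite fun i => (continuous_apply i).isOpen_preimage _ isOpen_Ioi
    have hUconv : Convex ℝ U := by
      have : U = ⋂ i, {u : Fin m1 → ℝ | v < u i} := by
        ext u; simp [hU, Set.mem_iInter]
      rw [this]
      exact convex_iInter fun i =>
        convex_halfSpace_gt ⟨fun a b => rfl, fun c a => rfl⟩ v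
    have hDconv : Convex ℝ D := by
      rintro u1 ⟨y1, hy10, hy11, hy1u⟩ u2 ⟨y2, hy20, hy21, hy2u⟩ s t hs ht hst
      refine ⟨s • y1 + t • y2, fun j => by
        simp only [Pi.add_apply, Pi.smul_apply, smul_eq_mul]
        exact add_nonneg (mul_nonneg hs (hy10 j)) (mul_nonneg ht (hy20 j)), ?_, fun i => ?_⟩
      · simp only [Pi.add_apply, Pi.smul_apply, smul_eq_mul]
        rw [Finset.sum_add_distrib, ← Finset.mul_sum, ← Finset.mul_sum, hy11, hy21]
        linarith
      · have h1 : s * u1 i ≤ s * ∑ j, A i j * y1 j :=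
          mul_le_mul_of_nonneg_left (hy1u i) hs
        have h2 : t * u2 i ≤ t * ∑ j, A i j * y2 j :=
          mul_le_mul_of_nonneg_left (hy2u i) ht
        have : ∑ j, A i j * (s * y1 j + t * y2 j)
            = s * (∑ j, A i j * y1 j) + t * (∑ j, A i j * y2 j) := by
          rw [Finset.mul_sum, Finset.mul_sum, ← Finset.sum_add_distrib]
          congr 1; ext j; ring
        simp only [Pi.add_apply, Pi.smul_apply, smul_eq_mul] at *
        rw [this]
        linarith
    have hdisj : Disjoint U D := by
      rw [Set.disjoint_left]
      rintro u hu ⟨y, hy0, hy1, hyu⟩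
      have hν : Finset.univ.inf' hne1 (fun i => ∑ j, A i j * y j) ∈ Q :=
        ⟨y, hy0, hy1, fun i => Finset.inf'_le _ (Finset.mem_univ i)⟩
      have hlt : v < Finset.univ.inf' hne1 (fun i => ∑ j, A i j * y j) := by
        rw [Finset.lt_inf'_iff]
        exact fun i _ => lt_of_lt_of_le (hu i) (hyu i)
      exact absurd (le_csSup hQbdd hν) (not_le.mpr hlt)
    obtain ⟨f, c, hfU, hfD⟩ := geometric_hahn_banach_open hUconv hUopen hDconv hdisj
    -- representation of f
    have hrep : ∀ u : Fin m1 → ℝ, f u = ∑ i, u i * f (Pi.single i 1) := by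
      intro u
      have : u = ∑ i, u i • (Pi.single i 1 : Fin m1 → ℝ) := by
        funext k
        simp [Finset.sum_apply, Pi.single_apply, mul_ite]
      conv_lhs => rw [this]
      rw [map_sum]
      congr 1; ext i
      rw [map_smul, smul_eq_mul]
    -- the separating vector, negated
    set x : Fin m1 → ℝ := fun i => -(f (Pi.single i 1)) with hx
    -- nonnegativity of x
    have hx0 : ∀ i, 0 ≤ x i := by
      intro i
      by_contra h
      push_neg at h
      have ha : 0 < f (Pi.single i 1) := by simp only [hx, neg_neg] at h; linarith
      set a := f (Pi.single i 1)
      set base : Fin m1 → ℝ := fun _ => v + 1 with hbase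
      set t : ℝ := max 0 ((c - f base) / a) + 1 with ht
      have htpos : 0 < t := by positivity
      have hmem : base + t • (Pi.single i 1 : Fin m1 → ℝ) ∈ U := by
        intro k
        simp only [Pi.add_apply, Pi.smul_apply, hbase, smul_eq_mul, Pi.single_apply]
        by_cases hk : k = i <;> simp [hk] <;> nlinarith
      have := hfU _ hmem
      rw [map_add, map_smul, smul_eq_mul] at this
      have h1 : (c - f base) / a < t := by
        rw [ht]
        have := le_max_right 0 ((c - f base) / a)
        linarith
      have h2 : c - f base < t * a := by
        rw [div_lt_iff₀ ha] at h1
        linarith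
      linarith
    -- basic members of U and D
    have hbaseU : ∀ ε : ℝ, 0 < ε → (fun _ : Fin m1 => v + ε) ∈ U := fun ε hε i =>
      lt_add_of_pos_right v hε
    have hDmem : ∀ j : Fin m2, (fun i => A i j) ∈ D := by
      intro j
      refine ⟨Pi.single j 1, fun k => ?_, ?_, fun i => le_of_eq ?_⟩
      · simp [Pi.single_apply]; split <;> norm_num
      · simp [Finset.sum_pi_single]
      · rw [Finset.sum_eq_single j]
        · simp
        · intro k _ hk; simp [Pi.single_apply, hk]
        · intro h; exact absurd (Finset.mem_univ j) h
    -- f is nonzero: sum of x is positive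
    have hfval : ∀ u : Fin m1 → ℝ, f u = -∑ i, u i * x i := by
      intro u
      rw [hrep]
      rw [← Finset.sum_neg_distrib]
      refine Finset.sum_congr rfl fun i _ => by simp [hx]
    have hSpos : 0 < ∑ i, x i := by
      rcases (Finset.sum_nonneg (fun i _ => hx0 i)).lt_or_eq with h | h
      · exact h
      · exfalso
        have hz : ∀ i ∈ Finset.univ, x i = 0 :=
          (Finset.sum_eq_zero_iff_of_nonneg (fun i _ => hx0 i)).mp h.symm
        have hf0 : ∀ u : Fin m1 → ℝ, f u = 0 := by
          intro u
          rw [hfval]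
          simp only [neg_eq_zero]
          exact Finset.sum_eq_zero fun i hi => by rw [hz i hi, mul_zero]
        have h1 := hfU _ (hbaseU 1 one_pos)
        have h2 := hfD _ (hDmem j0)
        rw [hf0] at h1
        rw [hf0] at h2
        linarith
    set S : ℝ := ∑ i, x i with hS
    -- column inequalities
    have hcol : ∀ j, ∑ i, A i j * x i ≤ -c := by
      intro j
      have := hfD _ (hDmem j)
      rw [hfval] at this
      linarith
    -- lower bound on -c
    have hcv : -c ≤ v * S := by
      by_contra h
      push_neg at h
      set ε : ℝ := (-c - v * S) / (2 * S) with hε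
      have hεpos : 0 < ε := by
        apply div_pos
        · linarith
        · linarith
      have := hfU _ (hbaseU ε hεpos)
      rw [hfval] at this
      have hsum : ∑ i, (v + ε) * x i = (v + ε) * S := by
        rw [hS, Finset.mul_sum]
      rw [hsum] at this
      have hεS : ε * S = (-c - v * S) / 2 := by
        rw [hε]
        field_simp
      nlinarith
    -- v is in P
    have hvP : v ∈ P := by
      refine ⟨fun i => S⁻¹ * x i, fun i => mul_nonneg (inv_nonneg.mpr hSpos.le) (hx0 i), ?_, fun j => ?_⟩
      · rw [← Finset.mul_sum, ← hS, inv_mul_cancel₀ (ne_of_gt hSpos)]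
      · have : ∑ i, A i j * (S⁻¹ * x i) = S⁻¹ * ∑ i, A i j * x i := by
          rw [Finset.mul_sum]
          congr 1; ext i; ring
        rw [this]
        rw [inv_mul_le_iff₀ hSpos]
        calc ∑ i, A i j * x i ≤ -c := hcol j
          _ ≤ v * S := hcv
          _ = S * v := mul_comm v S
    exact csInf_le hPbdd hvP
  exact le_antisymm hstrong hweak
end

section
/- For the primal game LP min{μ : μ·e^{m2} ⪰ Aᵀx, eᵀx = 1, x ⪰ 0}, there exist index sets I* ⊆ [m1] and J* ⊆ [m2] with |I*| = |J*| = d for some d ≤ min{m1, m2}, and an optimal solution (x*, μ*) such that x* vanishes outside I*, the square matrix [[Aᵀ_{I*,J*}, -e]; [eᵀ, 0]] of size (d+1)×(d+1) is nonsingular, and (x*_{I*}, μ*) is the unique solution to A_{I*,J*}ᵀ x_{I*} = μ·e^{|J*|} together with eᵀx_{I*} = 1. -/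
open Finset

set_option maxHeartbeats 1600000

/-- For the primal game LP there exist index sets `I*, J*` of equal
size `d ≤ min m1 m2` and an optimal solution `(x*, μ*)` supported on `I*`, such
that the bordered matrix `[[Aᵀ_{I*,J*}, -e]; [eᵀ, 0]]` is nonsingular and
`(x*_{I*}, μ*)` is the unique solution of `A_{I*,J*}ᵀ x_{I*} = μ·e`, `eᵀx_{I*} = 1`. -/
theorem stmt_3 (m1 m2 : ℕ) (hm1 : 0 < m1) (hm2 : 0 < m2)
    (A : Matrix (Fin m1) (Fin m2) ℝ) :
    ∃ (d : ℕ) (I : Fin d → Fin m1) (J : Fin d → Fin m2),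
      d ≤ min m1 m2 ∧ Function.Injective I ∧ Function.Injective J ∧
      ∃ (xs : Fin m1 → ℝ) (μs : ℝ),
        -- (xs, μs) is a feasible solution of the primal LP
        ((∀ i, 0 ≤ xs i) ∧ (∑ i, xs i) = 1 ∧ (∀ j, (∑ i, A i j * xs i) ≤ μs)) ∧
        -- (xs, μs) is optimal
        (∀ (x : Fin m1 → ℝ) (μ : ℝ), (∀ i, 0 ≤ x i) → (∑ i, x i) = 1 →
          (∀ j, (∑ i, A i j * x i) ≤ μ) → μs ≤ μ) ∧
        -- xs vanishes outside I
        (∀ i, i ∉ Set.range I → xs i = 0) ∧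
        -- the bordered matrix is nonsingular
        (Matrix.of (Sum.elim
            (fun j : Fin d => Sum.elim (fun i : Fin d => A (I i) (J j))
              (fun _ : Unit => (-1 : ℝ)))
            (fun _ : Unit => Sum.elim (fun _ : Fin d => (1 : ℝ))
              (fun _ : Unit => (0 : ℝ))))).det ≠ 0 ∧
        -- (xs restricted to I, μs) solves the linear system
        ((∀ j : Fin d, (∑ i, A (I i) (J j) * xs (I i)) = μs) ∧ (∑ i, xs (I i)) = 1) ∧
        -- and is the unique solution of that system
        (∀ (xI : Fin d → ℝ) (μ : ℝ),
          (∀ j : Fin d, (∑ i, A (I i) (J j) * xI i) = μ) → (∑ i, xI i) = 1 →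
          xI = (fun i => xs (I i)) ∧ μ = μs) := by
  classical
  haveI : Nonempty (Fin m2) := ⟨⟨0, hm2⟩⟩
  haveI : Nonempty (Fin m1) := ⟨⟨0, hm1⟩⟩
  -- the objective function
  set f : (Fin m1 → ℝ) → ℝ :=
    fun x => Finset.univ.sup' univ_nonempty (fun j => ∑ i, A i j * x i) with hf_def
  have hf_cont : Continuous f := by
    rw [hf_def]
    exact Continuous.finset_sup'_apply univ_nonempty fun j _ =>
      continuous_finset_sum _ fun i _ => (continuous_const.mul (continuous_apply i))
  have hf_le : ∀ x j, (∑ i, A i j * x i) ≤ f x := by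
    intro x j
    exact Finset.le_sup' (fun j => ∑ i, A i j * x i) (mem_univ j)
  have hf_forall_le : ∀ x μ, (∀ j, (∑ i, A i j * x i) ≤ μ) → f x ≤ μ := by
    intro x μ h
    exact Finset.sup'_le _ _ fun j _ => h j
  -- the simplex and its compactness; minimize f
  obtain ⟨x₀, hx₀mem, hx₀min⟩ :=
    (isCompact_stdSimplex ℝ (Fin m1)).exists_isMinOn
      ⟨fun i => if i = ⟨0, hm1⟩ then 1 else 0, fun i => by positivity, by simp⟩
      hf_cont.continuousOn
  set v : ℝ := f x₀ with hv_def
  -- the optimal face P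
  set P : Set (Fin m1 → ℝ) := {x | x ∈ stdSimplex ℝ (Fin m1) ∧ f x ≤ v} with hP_def
  have hPcompact : IsCompact P := by
    apply (isCompact_stdSimplex ℝ (Fin m1)).of_isClosed_subset
    · exact (isClosed_stdSimplex ℝ _).inter (isClosed_le hf_cont continuous_const)
    · intro x hx; exact hx.1
  have hPconvex : Convex ℝ P := by
    have : P = stdSimplex ℝ (Fin m1) ∩ ⋂ j, {x | (∑ i, A i j * x i) ≤ v} := by
      ext x
      simp only [hP_def, Set.mem_setOf_eq, Set.mem_inter_iff, Set.mem_iInter]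
      exact ⟨fun ⟨h1, h2⟩ => ⟨h1, fun j => le_trans (hf_le x j) h2⟩,
             fun ⟨h1, h2⟩ => ⟨h1, hf_forall_le x v h2⟩⟩
    rw [this]
    refine (convex_stdSimplex ℝ _).inter (convex_iInter fun j => ?_)
    refine convex_halfSpace_le ⟨fun a b => ?_, fun c a => ?_⟩ v
    · simp [mul_add, Finset.sum_add_distrib]
    · simp only [smul_eq_mul, Finset.mul_sum, Pi.smul_apply]
      congr 1; ext i; ring
  obtain ⟨xs, hxsP, hxs_ext⟩ := hPcompact.extremePoints_nonempty ⟨x₀, hx₀mem, le_rfl⟩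
  have hxs_nonneg : ∀ i, 0 ≤ xs i := hxsP.1.1
  have hxs_sum : (∑ i, xs i) = 1 := hxsP.1.2
  have hxs_fe : f xs ≤ v := hxsP.2
  have hxs_le : ∀ j, (∑ i, A i j * xs i) ≤ v := fun j => le_trans (hf_le xs j) hxs_fe
  have hfxs : f xs = v := le_antisymm hxs_fe (hx₀min ⟨hxs_nonneg, hxs_sum⟩)
  have hopt : ∀ (x : Fin m1 → ℝ) (μ : ℝ), (∀ i, 0 ≤ x i) → (∑ i, x i) = 1 →
      (∀ j, (∑ i, A i j * x i) ≤ μ) → v ≤ μ := by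
    intro x μ hx1 hx2 hx3
    exact le_trans (hx₀min ⟨hx1, hx2⟩) (hf_forall_le x μ hx3)
  -- support
  set S : Finset (Fin m1) := Finset.univ.filter (fun i => xs i ≠ 0) with hS_def
  set s : ℕ := S.card with hs_def
  have hS_zero : ∀ i, i ∉ S → xs i = 0 := by
    intro i hi; by_contra h; exact hi (by simp [hS_def, h])
  have hS_pos : ∀ i ∈ S, 0 < xs i := by
    intro i hi
    rcases lt_or_eq_of_le (hxs_nonneg i) with h | h
    · exact h
    · exact absurd h.symm (by simpa [hS_def] using hi)
  have hS_ne : S.Nonempty := by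
    by_contra h
    rw [Finset.not_nonempty_iff_eq_empty] at h
    have h0 : (∑ i, xs i) = 0 := Finset.sum_eq_zero fun i _ => hS_zero i (by simp [h])
    rw [hxs_sum] at h0; norm_num at h0
  have hs_pos : 0 < s := Finset.card_pos.mpr hS_ne
  set I : Fin s → Fin m1 := fun k => ((S.orderIsoOfFin rfl) k : Fin m1) with hI_def
  have hI_inj : Function.Injective I := by
    intro a b hab
    exact (S.orderIsoOfFin rfl).injective (Subtype.ext hab)
  have hI_mem : ∀ k, I k ∈ S := fun k => ((S.orderIsoOfFin rfl) k).2
  have hI_range : ∀ i ∈ S, ∃ k, I k = i := by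
    intro i hi
    exact ⟨(S.orderIsoOfFin rfl).symm ⟨i, hi⟩,
      congrArg Subtype.val ((S.orderIsoOfFin rfl).apply_symm_apply ⟨i, hi⟩)⟩
  -- sum transfer lemmas
  have hsumI : ∀ g : Fin m1 → ℝ, (∑ k, g (I k)) = ∑ i ∈ S, g i := by
    intro g
    rw [← Finset.sum_coe_sort S g]
    exact Fintype.sum_equiv (S.orderIsoOfFin rfl).toEquiv _ _ (fun k => rfl)
  have hsumS : ∀ g : Fin m1 → ℝ, (∑ i ∈ S, g i * xs i) = ∑ i, g i * xs i := by
    intro g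
    apply Finset.sum_subset (Finset.subset_univ S)
    intro i _ hi; rw [hS_zero i hi, mul_zero]
  have hsumIS : ∀ g : Fin m1 → ℝ, (∑ k, g (I k) * xs (I k)) = ∑ i, g i * xs i := by
    intro g; rw [hsumI (fun i => g i * xs i), hsumS]
  -- tight columns
  set T : Finset (Fin m2) := Finset.univ.filter (fun j => (∑ i, A i j * xs i) = v) with hT_def
  have hT_ne : T.Nonempty := by
    obtain ⟨j, _, hj⟩ := Finset.exists_mem_eq_sup' (univ_nonempty (α := Fin m2))
      (fun j => ∑ i, A i j * xs i)
    refine ⟨j, ?_⟩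
    simp only [hT_def, mem_filter, mem_univ, true_and]
    rw [← hfxs]
    exact hj.symm
  have hT_slack : ∀ j, j ∉ T → (∑ i, A i j * xs i) < v := by
    intro j hj
    rcases lt_or_eq_of_le (hxs_le j) with h | h
    · exact h
    · exact absurd h (by simpa [hT_def] using hj)
  have hTval : ∀ j ∈ T, (∑ i, A i j * xs i) = v := by
    intro j hj
    simpa [hT_def] using hj
  -- lifted vectors in (Fin s ⊕ Unit) → ℝ
  set rv : Fin m2 → ((Fin s ⊕ Unit) → ℝ) :=
    fun j => Sum.elim (fun k => A (I k) j) (fun _ => -1) with hrv_def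
  set onevec : (Fin s ⊕ Unit) → ℝ := Sum.elim (fun _ => 1) (fun _ => 0) with honevec_def
  set F : Set ((Fin s ⊕ Unit) → ℝ) := insert onevec (rv '' ↑T) with hF_def
  have hspan : Submodule.span ℝ F = ⊤ := by
    by_contra hne
    obtain ⟨φ, hφ0, hφmap⟩ := Submodule.exists_dual_map_eq_bot_of_lt_top
      (lt_top_iff_ne_top.mpr hne) inferInstance
    have hφF : ∀ u ∈ F, φ u = 0 := by
      intro u hu
      have hmem : φ u ∈ Submodule.map φ (Submodule.span ℝ F) :=
        Submodule.mem_map_of_mem (Submodule.subset_span hu)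
      rw [hφmap] at hmem
      exact Submodule.mem_bot ℝ |>.mp hmem
    set c : (Fin s ⊕ Unit) → ℝ := fun q => φ (fun p => if q = p then 1 else 0) with hc_def
    have hφ_eval : ∀ u, φ u = ∑ q, u q * c q := by
      intro u
      conv_lhs => rw [pi_eq_sum_univ u]
      rw [map_sum]
      exact Finset.sum_congr rfl fun q _ => by rw [map_smul, smul_eq_mul, hc_def]
    set w : Fin s → ℝ := fun k => c (Sum.inl k) with hw_def
    set β : ℝ := c (Sum.inr ()) with hβ_def
    have hone : (∑ k, w k) = 0 := by
      have h := hφF onevec (Set.mem_insert _ _)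
      rw [hφ_eval] at h
      simpa [honevec_def, Fintype.sum_sum_type] using h
    have hrow : ∀ j ∈ T, (∑ k, A (I k) j * w k) = β := by
      intro j hj
      have h := hφF (rv j) (Set.mem_insert_of_mem _ ⟨j, hj, rfl⟩)
      rw [hφ_eval] at h
      rw [Fintype.sum_sum_type] at h
      simp only [hrv_def, Sum.elim_inl, Sum.elim_inr, neg_one_mul] at h
      have h' : (∑ k, A (I k) j * w k) - β = 0 := by
        rw [← h]; simp [hw_def, hβ_def]; ring
      linarith
    have hw_ne : ∃ k, w k ≠ 0 := by
      by_contra hw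
      push_neg at hw
      have hβ0 : β = 0 := by
        obtain ⟨j, hj⟩ := hT_ne
        have h := hrow j hj
        simp [hw] at h
        exact h.symm
      apply hφ0
      apply LinearMap.ext
      intro u
      rw [hφ_eval]
      have hcz : ∀ q, c q = 0 := by
        intro q
        cases q with
        | inl k => exact hw k
        | inr u => cases u; exact hβ0
      simp [hcz]
    -- extend w to Fin m1 by zero outside S
    set wt : Fin m1 → ℝ :=
      fun i => if h : i ∈ S then w ((S.orderIsoOfFin rfl).symm ⟨i, h⟩) else 0 with hwt_def
    have hwt0 : ∀ i, i ∉ S → wt i = 0 := by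
      intro i hi; simp only [hwt_def, dif_neg hi]
    have hwtI : ∀ k, wt (I k) = w k := by
      intro k
      have h : I k ∈ S := hI_mem k
      simp only [hwt_def, dif_pos h]
      have h2 : (⟨I k, h⟩ : {x // x ∈ S}) = (S.orderIsoOfFin rfl) k := Subtype.ext rfl
      rw [h2, OrderIso.symm_apply_apply]
    have hsum_wt : ∀ g : Fin m1 → ℝ, (∑ i, g i * wt i) = ∑ k, g (I k) * w k := by
      intro g
      rw [← Finset.sum_subset (Finset.subset_univ S)
        (fun i _ hi => by rw [hwt0 i hi, mul_zero])]
      rw [← hsumI (fun i => g i * wt i)]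
      exact Finset.sum_congr rfl fun k _ => by rw [hwtI]
    have hwt_sum : (∑ i, wt i) = 0 := by
      have h := hsum_wt (fun _ => 1)
      simp only [one_mul] at h
      rw [h, hone]
    -- choose ε
    obtain ⟨k₀, hk₀⟩ := hw_ne
    set m0 : ℝ := S.inf' hS_ne xs with hm0_def
    have hm0_pos : 0 < m0 := by
      rw [hm0_def, Finset.lt_inf'_iff]
      exact fun i hi => hS_pos i hi
    have hm0_le : ∀ i ∈ S, m0 ≤ xs i := fun i hi => Finset.inf'_le _ hi
    set Wm : ℝ := 1 + ∑ i, |wt i| with hWm_def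
    have hWm_pos : 0 < Wm := by
      rw [hWm_def]
      have : (0:ℝ) ≤ ∑ i, |wt i| := Finset.sum_nonneg fun i _ => abs_nonneg _
      linarith
    have hwt_le : ∀ i, |wt i| ≤ Wm := by
      intro i
      have h1 : |wt i| ≤ ∑ i, |wt i| :=
        Finset.single_le_sum (fun i _ => abs_nonneg (wt i)) (mem_univ i)
      rw [hWm_def]; linarith
    set g : Fin m2 → ℝ := fun j => ∑ i, A i j * wt i with hg_def
    set TC : Finset (Fin m2) := Finset.univ.filter (fun j => j ∉ T) with hTC_def
    set ε2 : ℝ := if h : TC.Nonempty then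
        TC.inf' h (fun j => (v - ∑ i, A i j * xs i) / (1 + |g j|)) else 1 with hε2_def
    have hε2_pos : 0 < ε2 := by
      rw [hε2_def]
      split_ifs with h
      · rw [Finset.lt_inf'_iff]
        intro j hj
        have hjT : j ∉ T := by simpa [hTC_def] using hj
        have hsl := hT_slack j hjT
        have hg1 : (0:ℝ) < 1 + |g j| := by positivity
        exact div_pos (by linarith) hg1
      · norm_num
    have hε2_le : ∀ j, j ∉ T → ε2 ≤ (v - ∑ i, A i j * xs i) / (1 + |g j|) := by
      intro j hj
      rw [hε2_def]
      have hjTC : j ∈ TC := by simp [hTC_def, hj]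
      rw [dif_pos ⟨j, hjTC⟩]
      exact Finset.inf'_le _ hjTC
    set ε : ℝ := min (m0 / Wm) ε2 with hε_def
    have hε_pos : 0 < ε := lt_min (div_pos hm0_pos hWm_pos) hε2_pos
    have hεWm : ε * Wm ≤ m0 := by
      have h1 : ε ≤ m0 / Wm := min_le_left _ _
      calc ε * Wm ≤ (m0 / Wm) * Wm := by nlinarith
        _ = m0 := by field_simp
    -- algebra for the perturbed point
    have hexp : ∀ (t : ℝ) (j : Fin m2),
        (∑ i, A i j * (xs i + t * wt i)) = (∑ i, A i j * xs i) + t * g j := by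
      intro t j
      rw [hg_def, Finset.mul_sum, ← Finset.sum_add_distrib]
      exact Finset.sum_congr rfl fun i _ => by ring
    have hgβ : ∀ j ∈ T, g j = β := by
      intro j hj
      have h1 : g j = ∑ i, A i j * wt i := by rw [hg_def]
      rw [h1, hsum_wt (fun i => A i j)]
      exact hrow j hj
    have hTval : ∀ j ∈ T, (∑ i, A i j * xs i) = v := by
      intro j hj
      simpa [hT_def] using hj
    have hfeas : ∀ t : ℝ, |t| ≤ ε → (∀ i, 0 ≤ xs i + t * wt i) ∧
        (∑ i, (xs i + t * wt i)) = 1 ∧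
        (∀ j, j ∉ T → (∑ i, A i j * (xs i + t * wt i)) < v) := by
      intro t ht
      have ht0 : 0 ≤ |t| := abs_nonneg t
      refine ⟨?_, ?_, ?_⟩
      · intro i
        by_cases hi : i ∈ S
        · have h1 : |t * wt i| ≤ ε * Wm := by
            rw [abs_mul]
            exact mul_le_mul ht (hwt_le i) (abs_nonneg _) (le_of_lt hε_pos)
          have h2 : -(t * wt i) ≤ m0 := le_trans (neg_le_abs _) (le_trans h1 hεWm)
          have h3 := hm0_le i hi
          linarith
        · rw [hwt0 i hi, mul_zero, add_zero]
          exact hxs_nonneg i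
      · rw [Finset.sum_add_distrib, hxs_sum, ← Finset.mul_sum, hwt_sum, mul_zero, add_zero]
      · intro j hj
        rw [hexp t j]
        have hsl := hT_slack j hj
        have hg1 : (0:ℝ) < 1 + |g j| := by positivity
        have h1 : ε2 * (1 + |g j|) ≤ v - ∑ i, A i j * xs i :=
          (le_div_iff₀ hg1).mp (hε2_le j hj)
        have h3 : t * g j ≤ |t| * |g j| := by
          calc t * g j ≤ |t * g j| := le_abs_self _
            _ = |t| * |g j| := abs_mul _ _
        have h4 : |t| * |g j| < ε2 * (1 + |g j|) := by
          have h5 : |t| ≤ ε2 := le_trans ht (min_le_right _ _)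
          nlinarith [abs_nonneg (g j)]
        linarith
    by_cases hβ0 : β = 0
    · -- contradiction with extremality
      have hp := hfeas ε (by rw [abs_of_pos hε_pos])
      have hm := hfeas (-ε) (by rw [abs_neg, abs_of_pos hε_pos])
      set xp : Fin m1 → ℝ := fun i => xs i + ε * wt i with hxp_def
      set xm : Fin m1 → ℝ := fun i => xs i + (-ε) * wt i with hxm_def
      have hconstr : ∀ (t : ℝ), |t| ≤ ε → (∀ j, (∑ i, A i j * (xs i + t * wt i)) ≤ v) := by
        intro t ht j
        by_cases hj : j ∈ T
        · rw [hexp t j, hTval j hj, hgβ j hj, hβ0, mul_zero, add_zero]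
        · exact le_of_lt ((hfeas t ht).2.2 j hj)
      have hxpP : xp ∈ P := by
        refine ⟨⟨hp.1, hp.2.1⟩, hf_forall_le _ _ ?_⟩
        exact hconstr ε (by rw [abs_of_pos hε_pos])
      have hxmP : xm ∈ P := by
        refine ⟨⟨hm.1, hm.2.1⟩, hf_forall_le _ _ ?_⟩
        exact hconstr (-ε) (by rw [abs_neg, abs_of_pos hε_pos])
      have hseg : xs ∈ openSegment ℝ xp xm := by
        refine ⟨1/2, 1/2, by norm_num, by norm_num, by norm_num, ?_⟩
        funext i
        simp only [hxp_def, hxm_def, Pi.add_apply, Pi.smul_apply, smul_eq_mul]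
        ring
      have hcon := hxs_ext hxpP hxmP hseg
      have hxp_ne : xp ≠ xs := by
        intro hcontra
        have h := congrFun hcontra (I k₀)
        rw [hxp_def] at h
        simp only [hwtI] at h
        have : ε * w k₀ = 0 := by linarith [h]
        rcases mul_eq_zero.mp this with h' | h'
        · exact absurd h' (ne_of_gt hε_pos)
        · exact hk₀ h'
      exact hxp_ne hcon
    · -- contradiction with optimality
      set t : ℝ := if 0 < β then -ε else ε with ht_def
      have ht_abs : |t| ≤ ε := by
        rw [ht_def]; split_ifs <;> simp [abs_of_pos hε_pos, le_of_lt hε_pos]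
      have htβ : t * β < 0 := by
        rw [ht_def]
        rcases lt_trichotomy β 0 with h | h | h
        · rw [if_neg (by linarith)]
          exact mul_neg_of_pos_of_neg hε_pos h
        · exact absurd h hβ0
        · rw [if_pos h]
          have := mul_pos hε_pos h
          nlinarith
      have hp := hfeas t ht_abs
      have hge : v ≤ f (fun i => xs i + t * wt i) := hx₀min ⟨hp.1, hp.2.1⟩
      have hlt : f (fun i => xs i + t * wt i) < v := by
        rw [hf_def]
        rw [Finset.sup'_lt_iff]
        intro j _
        by_cases hj : j ∈ T
        · rw [hexp t j, hTval j hj, hgβ j hj]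
          linarith
        · exact hp.2.2 j hj
      linarith
  -- extract a basis of W from F containing onevec
  have honeF : onevec ∈ F := Set.mem_insert _ _
  have hone_ne : onevec ≠ 0 := by
    intro h
    have h2 := congrFun h (Sum.inl ⟨0, hs_pos⟩)
    simp [honevec_def] at h2
  have hli1 : LinearIndependent ℝ
      (fun x => (x : (Fin s ⊕ Unit) → ℝ) : ({onevec} : Set ((Fin s ⊕ Unit) → ℝ)) → _) :=
    (linearIndepOn_singleton_iff (R := ℝ) (v := id) (i := onevec)).mpr hone_ne
  set b : Set ((Fin s ⊕ Unit) → ℝ) :=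
    LinearIndepOn.extend (v := id) hli1 (Set.singleton_subset_iff.mpr honeF) with hb_def
  have hb_sub : b ⊆ F := LinearIndepOn.extend_subset (v := id) hli1 _
  have hone_b : onevec ∈ b := LinearIndepOn.subset_extend (v := id) hli1 _ rfl
  have hb_li : LinearIndependent ℝ (fun x => (x : (Fin s ⊕ Unit) → ℝ) : b → _) :=
    LinearIndepOn.linearIndepOn_extend (v := id) hli1 _
  have hb_span : Submodule.span ℝ b = ⊤ := by
    rw [eq_top_iff, ← hspan]
    exact Submodule.span_le.mpr (LinearIndepOn.subset_span_extend hli1 _)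
  have hb_fin : b.Finite := hb_li.setFinite
  haveI : Fintype b := hb_fin.fintype
  have hb_card : Fintype.card b = s + 1 := by
    have hfr : Module.finrank ℝ ((Fin s ⊕ Unit) → ℝ) = s + 1 := by
      simp [Module.finrank_pi]
    have h := Module.finrank_eq_card_basis
      (Module.Basis.mk hb_li (by rw [Subtype.range_coe, hb_span]))
    rw [hfr] at h
    exact h.symm
  set bF : Finset ((Fin s ⊕ Unit) → ℝ) := hb_fin.toFinset with hbF_def
  have hbF_mem : ∀ u, u ∈ bF ↔ u ∈ b := fun u => hb_fin.mem_toFinset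
  have hbF_card : bF.card = s + 1 := by
    rw [hbF_def, Set.Finite.card_toFinset]
    exact hb_card
  set bF' : Finset ((Fin s ⊕ Unit) → ℝ) := bF.erase onevec with hbF'_def
  have hbF'_card : bF'.card = s := by
    rw [hbF'_def, Finset.card_erase_of_mem ((hbF_mem onevec).mpr hone_b), hbF_card]
    omega
  set u : Fin s → ((Fin s ⊕ Unit) → ℝ) :=
    fun k => (bF'.equivFin.symm (Fin.cast hbF'_card.symm k) : _) with hu_def
  have hu_mem : ∀ k, u k ∈ bF' := fun k => (bF'.equivFin.symm _).2
  have hu_inj : Function.Injective u := by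
    intro a b hab
    have h := bF'.equivFin.symm.injective (Subtype.ext hab)
    have h2 := congrArg Fin.val h
    exact Fin.ext h2
  have hu_ne : ∀ k, u k ≠ onevec := fun k => Finset.ne_of_mem_erase (hu_mem k)
  have hu_b : ∀ k, u k ∈ b := fun k => (hbF_mem _).mp (Finset.mem_of_mem_erase (hu_mem k))
  have hu_rv : ∀ k, ∃ j, j ∈ T ∧ rv j = u k := by
    intro k
    have h := hb_sub (hu_b k)
    rw [hF_def] at h
    rcases h with h | h
    · exact absurd h (hu_ne k)
    · obtain ⟨j, hj, hj2⟩ := h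
      exact ⟨j, hj, hj2⟩
  choose J hJT hJrv using hu_rv
  have hJ_inj : Function.Injective J := by
    intro a b hab
    apply hu_inj
    rw [← hJrv a, ← hJrv b, hab]
  -- the bordered matrix
  set M : Matrix (Fin s ⊕ Unit) (Fin s ⊕ Unit) ℝ := Matrix.of (Sum.elim
      (fun j : Fin s => Sum.elim (fun i : Fin s => A (I i) (J j))
        (fun _ : Unit => (-1 : ℝ)))
      (fun _ : Unit => Sum.elim (fun _ : Fin s => (1 : ℝ))
        (fun _ : Unit => (0 : ℝ)))) with hM_def
  have hM_row_inl : ∀ j, M (Sum.inl j) = u j := by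
    intro j
    rw [← hJrv j, hrv_def, hM_def]
    rfl
  have hM_row_inr : M (Sum.inr ()) = onevec := by
    rw [hM_def, honevec_def]; rfl
  -- rows of M are linearly independent
  have hrows_li : LinearIndependent ℝ (fun p => M p) := by
    set gg : (Fin s ⊕ Unit) → b := fun p =>
      Sum.casesOn p (fun j => ⟨u j, hu_b j⟩) (fun _ => ⟨onevec, hone_b⟩) with hgg_def
    have hgg_inj : Function.Injective gg := by
      intro p q hpq
      cases p with
      | inl j₁ =>
        cases q with
        | inl j₂ =>
          have h := congrArg Subtype.val hpq
          exact congrArg Sum.inl (hu_inj h)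
        | inr _ =>
          have h := congrArg Subtype.val hpq
          exact absurd h (hu_ne j₁)
      | inr u₁ =>
        cases q with
        | inl j₂ =>
          have h := congrArg Subtype.val hpq
          exact absurd h.symm (hu_ne j₂)
        | inr u₂ => cases u₁; cases u₂; rfl
    have hcomp : (fun p => M p) = (fun x => (x : (Fin s ⊕ Unit) → ℝ) : b → _) ∘ gg := by
      funext p
      cases p with
      | inl j => simp [hgg_def, hM_row_inl j]
      | inr u₁ => cases u₁; simp [hgg_def, hM_row_inr]
    rw [hcomp]
    exact hb_li.comp gg hgg_inj
  have hdet : M.det ≠ 0 := by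
    rw [Ne, ← Matrix.exists_vecMul_eq_zero_iff]
    rintro ⟨cvec, hc0, hcM⟩
    apply hc0
    have h := Fintype.linearIndependent_iff.mp hrows_li cvec ?_
    · funext p; exact h p
    · funext q
      have h2 := congrFun hcM q
      simpa [Matrix.vecMul, dotProduct, Finset.sum_apply] using h2
  -- the solution of the linear system
  have hsys1 : ∀ j : Fin s, (∑ i, A (I i) (J j) * xs (I i)) = v := by
    intro j
    rw [hsumIS (fun i => A i (J j))]
    exact hTval (J j) (hJT j)
  have hsys2 : (∑ k, xs (I k)) = 1 := by
    have h := hsumIS (fun _ => 1)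
    simp only [one_mul] at h
    rw [h, hxs_sum]
  refine ⟨s, I, J, ?_, hI_inj, hJ_inj, xs, v, ⟨hxs_nonneg, hxs_sum, hxs_le⟩, hopt, ?_, hdet,
    ⟨hsys1, hsys2⟩, ?_⟩
  · refine le_min ?_ ?_
    · have h1 : s ≤ Fintype.card (Fin m1) := by
        rw [hs_def]; exact Finset.card_le_univ S
      simpa using h1
    · have h1 : Fintype.card (Fin s) ≤ Fintype.card (Fin m2) :=
        Fintype.card_le_of_injective J hJ_inj
      simpa using h1
  · intro i hi
    by_contra h
    have hiS : i ∈ S := by simp [hS_def, h]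
    obtain ⟨k, hk⟩ := hI_range i hiS
    exact hi ⟨k, hk⟩
  · -- uniqueness
    intro xI μ hxIeq hxIsum
    set cdiff : (Fin s ⊕ Unit) → ℝ :=
      Sum.elim (fun k => xI k - xs (I k)) (fun _ => μ - v) with hcdiff_def
    have hker : M.mulVec cdiff = 0 := by
      funext p
      have hdot : M.mulVec cdiff p = ∑ q, M p q * cdiff q := rfl
      rw [hdot]
      simp only [Pi.zero_apply]
      rw [Fintype.sum_sum_type]
      cases p with
      | inl j =>
        have e1 : (∑ k, M (Sum.inl j) (Sum.inl k) * cdiff (Sum.inl k)) =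
            (∑ k, A (I k) (J j) * xI k) - (∑ k, A (I k) (J j) * xs (I k)) := by
          rw [← Finset.sum_sub_distrib]
          refine Finset.sum_congr rfl fun k _ => ?_
          show A (I k) (J j) * (xI k - xs (I k)) = _
          ring
        have e2 : (∑ q : Unit, M (Sum.inl j) (Sum.inr q) * cdiff (Sum.inr q))
            = -(μ - v) := by
          rw [Fintype.sum_unique]
          show (-1 : ℝ) * (μ - v) = _
          ring
        rw [e1, e2, hxIeq j, hsys1 j]
        ring
      | inr q₁ =>
        cases q₁
        have e1 : (∑ k, M (Sum.inr ()) (Sum.inl k) * cdiff (Sum.inl k)) =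
            (∑ k, xI k) - (∑ k, xs (I k)) := by
          rw [← Finset.sum_sub_distrib]
          refine Finset.sum_congr rfl fun k _ => ?_
          show (1 : ℝ) * (xI k - xs (I k)) = _
          ring
        have e2 : (∑ q : Unit, M (Sum.inr ()) (Sum.inr q) * cdiff (Sum.inr q)) = 0 := by
          rw [Fintype.sum_unique]
          show (0 : ℝ) * (μ - v) = _
          ring
        rw [e1, e2, hxIsum, hsys2]
        ring
    have hzero : cdiff = 0 := by
      by_contra h
      exact hdet (Matrix.exists_mulVec_eq_zero_iff.mp ⟨cdiff, h, hker⟩)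
    constructor
    · funext k
      have h := congrFun hzero (Sum.inl k)
      simp only [hcdiff_def, Sum.elim_inl, Pi.zero_apply] at h
      linarith
    · have h := congrFun hzero (Sum.inr ())
      simp only [hcdiff_def, Sum.elim_inr, Pi.zero_apply] at h
      linarith
end

section
/- Suppose δ > 0 is the minimal positive gap min{V_I − V : V_I − V > 0, I ⊆ [m1]} for the primal game LP of matrix A, and suppose Â satisfies |Â_{ij} − A_{ij}| ≤ r entrywise with r < δ/2. If a subset I ⊆ [m1] satisfies V̂_I = V̂ (i.e., I is optimal-support for the empirical LP), then V_I = V (I is optimal-support for the true LP). -/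
/-- The value of the primal game LP for matrix `A` with the row player's
strategy restricted to the support `I`. (Taking `I = univ` gives the
unrestricted LP value.) -/
noncomputable def LPval {m1 m2 : ℕ} (A : Matrix (Fin m1) (Fin m2) ℝ)
    (I : Finset (Fin m1)) : ℝ :=
  sInf {μ : ℝ | ∃ x : Fin m1 → ℝ, (∀ i, 0 ≤ x i) ∧ (∀ i, i ∉ I → x i = 0) ∧
    (∑ i, x i) = 1 ∧ ∀ j, (∑ i, A i j * x i) ≤ μ}

namespace Stmt13Aux

def Sset {m1 m2 : ℕ} (A : Matrix (Fin m1) (Fin m2) ℝ) (I : Finset (Fin m1)) : Set ℝ :=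
  {μ : ℝ | ∃ x : Fin m1 → ℝ, (∀ i, 0 ≤ x i) ∧ (∀ i, i ∉ I → x i = 0) ∧
    (∑ i, x i) = 1 ∧ ∀ j, (∑ i, A i j * x i) ≤ μ}

lemma LPval_eq {m1 m2 : ℕ} (A : Matrix (Fin m1) (Fin m2) ℝ) (I : Finset (Fin m1)) :
    LPval A I = sInf (Sset A I) := rfl

lemma basic_mem {m1 m2 : ℕ} {A : Matrix (Fin m1) (Fin m2) ℝ} {I : Finset (Fin m1)}
    {i0 : Fin m1} (hi0 : i0 ∈ I) {μ : ℝ} (hμ : ∀ j, A i0 j ≤ μ) : μ ∈ Sset A I := by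
  refine ⟨fun i => if i = i0 then 1 else 0, ?_, ?_, ?_, ?_⟩
  · intro i; positivity
  · intro i hi
    simp only [ite_eq_right_iff]
    rintro rfl; exact absurd hi0 hi
  · simp
  · intro j
    have : (∑ i, A i j * (if i = i0 then 1 else 0)) = A i0 j := by
      rw [Finset.sum_eq_single i0] <;> simp +contextual
    rw [this]; exact hμ j

lemma Sset_nonempty {m1 m2 : ℕ} (A : Matrix (Fin m1) (Fin m2) ℝ) {I : Finset (Fin m1)}
    (hI : I.Nonempty) : (Sset A I).Nonempty := by
  obtain ⟨i0, hi0⟩ := hI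
  refine ⟨∑ j, |A i0 j|, basic_mem hi0 fun j => ?_⟩
  exact (le_abs_self _).trans (Finset.single_le_sum (fun j _ => abs_nonneg (A i0 j))
    (Finset.mem_univ j))

lemma Sset_bddBelow {m1 m2 : ℕ} (A : Matrix (Fin m1) (Fin m2) ℝ) (I : Finset (Fin m1))
    (j0 : Fin m2) : BddBelow (Sset A I) := by
  refine ⟨-(∑ i, |A i j0|), ?_⟩
  rintro μ ⟨x, hx0, _, hxs, hxμ⟩
  have hterm : ∀ i : Fin m1, -|A i j0| ≤ A i j0 * x i := by
    intro i
    have hx1 : x i ≤ 1 := by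
      rw [← hxs]
      exact Finset.single_le_sum (fun i _ => hx0 i) (Finset.mem_univ i)
    nlinarith [neg_abs_le (A i j0), abs_nonneg (A i j0), hx0 i]
  calc -(∑ i, |A i j0|) = ∑ i, -|A i j0| := by rw [Finset.sum_neg_distrib]
    _ ≤ ∑ i, A i j0 * x i := Finset.sum_le_sum fun i _ => hterm i
    _ ≤ μ := hxμ j0

lemma perturb {m1 m2 : ℕ} {A B : Matrix (Fin m1) (Fin m2) ℝ} {I : Finset (Fin m1)} {r : ℝ}
    (hr : ∀ i j, B i j ≤ A i j + r) (hbdd : BddBelow (Sset B I))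
    (hne : (Sset A I).Nonempty) : sInf (Sset B I) ≤ sInf (Sset A I) + r := by
  rw [← sub_le_iff_le_add]
  apply le_csInf hne
  rintro μ ⟨x, hx0, hxI, hxs, hxμ⟩
  rw [sub_le_iff_le_add]
  refine csInf_le hbdd ⟨x, hx0, hxI, hxs, fun j => ?_⟩
  calc (∑ i, B i j * x i) ≤ ∑ i, (A i j * x i + r * x i) := by
        refine Finset.sum_le_sum fun i _ => ?_
        have := mul_le_mul_of_nonneg_right (hr i j) (hx0 i)
        rw [add_mul] at this; exact this
    _ = (∑ i, A i j * x i) + r * ∑ i, x i := by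
        rw [Finset.sum_add_distrib, Finset.mul_sum]
    _ ≤ μ + r := by rw [hxs, mul_one]; exact add_le_add_left (hxμ j) r

lemma mono {m1 m2 : ℕ} (A : Matrix (Fin m1) (Fin m2) ℝ) {I : Finset (Fin m1)}
    (hI : I.Nonempty) (hbdd : BddBelow (Sset A Finset.univ)) :
    sInf (Sset A Finset.univ) ≤ sInf (Sset A I) := by
  apply csInf_le_csInf hbdd (Sset_nonempty A hI)
  rintro μ ⟨x, hx0, hxI, hxs, hxμ⟩
  exact ⟨x, hx0, fun i hi => absurd (Finset.mem_univ i) hi, hxs, hxμ⟩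

end Stmt13Aux

open Stmt13Aux in
/-- Let `δ > 0` be the minimal positive gap of the primal game LP
of `A`, and suppose `Â` satisfies `|Â − A| ≤ r` entrywise with `r < δ/2`. If a
(nonempty) subset `I` is an optimal support for the empirical LP
(`V̂_I = V̂`), then it is an optimal support for the true LP (`V_I = V`). -/
theorem stmt_13 (m1 m2 : ℕ) (A Ahat : Matrix (Fin m1) (Fin m2) ℝ) (r δ : ℝ)
    (hδ : IsLeast {g : ℝ | ∃ I : Finset (Fin m1), I.Nonempty ∧
        g = LPval A I - LPval A Finset.univ ∧ 0 < g} δ)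
    (hr : ∀ i j, |Ahat i j - A i j| ≤ r) (hrδ : r < δ / 2)
    (I : Finset (Fin m1)) (hI : I.Nonempty)
    (hemp : LPval Ahat I = LPval Ahat Finset.univ) :
    LPval A I = LPval A Finset.univ := by
  have hUniv : (Finset.univ : Finset (Fin m1)).Nonempty := hI.mono (Finset.subset_univ I)
  -- dispose of the degenerate case m2 = 0
  rcases Nat.eq_zero_or_pos m2 with hm2 | hm2
  · exfalso
    have hSuniv : ∀ J : Finset (Fin m1), J.Nonempty → Sset A J = Set.univ := by
      intro J hJ
      obtain ⟨i0, hi0⟩ := hJ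
      ext μ
      simp only [Set.mem_univ, iff_true]
      exact basic_mem hi0 (fun j => absurd j.isLt (by omega))
    obtain ⟨J, hJ, hg, hgpos⟩ := hδ.1
    rw [LPval_eq, LPval_eq, hSuniv J hJ, hSuniv _ hUniv, sub_self] at hg
    exact absurd hg.symm hgpos.ne
  obtain ⟨j0, _⟩ : ∃ _ : Fin m2, True := ⟨⟨0, hm2⟩, trivial⟩
  have hδpos : 0 < δ := by obtain ⟨_, _, _, h⟩ := hδ.1; exact h
  have hAle : ∀ i j, Ahat i j ≤ A i j + r := fun i j => by
    have := abs_le.mp (hr i j); linarith [this.2]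
  have hBle : ∀ i j, A i j ≤ Ahat i j + r := fun i j => by
    have := abs_le.mp (hr i j); linarith [this.1]
  have hbddA : ∀ J : Finset (Fin m1), BddBelow (Sset A J) := fun J => Sset_bddBelow A J j0
  have hbddB : ∀ J : Finset (Fin m1), BddBelow (Sset Ahat J) := fun J => Sset_bddBelow Ahat J j0
  -- key inequalities
  have h1 : sInf (Sset A I) ≤ sInf (Sset Ahat I) + r :=
    perturb hBle (hbddA I) (Sset_nonempty Ahat hI)
  have h2 : sInf (Sset Ahat Finset.univ) ≤ sInf (Sset A Finset.univ) + r :=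
    perturb hAle (hbddB _) (Sset_nonempty A hUniv)
  have h3 : sInf (Sset A Finset.univ) ≤ sInf (Sset A I) := mono A hI (hbddA _)
  have hemp' : sInf (Sset Ahat I) = sInf (Sset Ahat Finset.univ) := hemp
  rw [LPval_eq, LPval_eq]
  by_contra hne
  have hgap : 0 < sInf (Sset A I) - sInf (Sset A Finset.univ) :=
    lt_of_le_of_ne (by linarith) (by intro h; exact hne (by linarith))
  have hge : δ ≤ sInf (Sset A I) - sInf (Sset A Finset.univ) := by
    apply hδ.2
    exact ⟨I, hI, by rw [LPval_eq, LPval_eq], hgap⟩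
  linarith
end
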